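/- arXiv:2601.03585 — 2 statements merged into one kernel-verified Lean document; each statement's English description precedes it below -/
import Mathlib

section
/- Fix n ≥ 1. Let M be a symmetric positive definite real n×n matrix, let N be a nonzero symmetric positive semidefinite real n×n matrix, and let c₁, c₂ ∈ ℝ. If in the exterior algebra ⋀(ℝ^{2n}) both v₁ ∧ (c₁·v₂ + c₂·Λ_M) = 0 and τ(N) ∧ (c₁·v₂ + c₂·Λ_M) = 0, then c₁ = 0 and c₂ = 0. -/
set_option maxHeartbeats 1000000
set_option synthInstance.maxHeartbeats 400000


noncomputable section ExteriorSetup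

/-- The exterior algebra `⋀(ℝ^{2n})`. -/
abbrev EA (n : ℕ) := ExteriorAlgebra ℝ (Fin (2 * n) → ℝ)

/-- The `i`-th standard basis vector of `ℝ^{2n}`. -/
def stdv (n : ℕ) (i : Fin (2 * n)) : Fin (2 * n) → ℝ := Pi.single i 1

/-- The image of the `i`-th standard basis vector in the exterior algebra. -/
def e (n : ℕ) (i : Fin (2 * n)) : EA n := ExteriorAlgebra.ι ℝ (stdv n i)

/-- The index `i` (for `0 ≤ i < n`) viewed in `Fin (2n)`. -/
def lo (n : ℕ) (i : Fin n) : Fin (2 * n) := ⟨i.1, by have := i.isLt; omega⟩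

/-- The index `n + i` (for `0 ≤ i < n`) viewed in `Fin (2n)`. -/
def hi (n : ℕ) (i : Fin n) : Fin (2 * n) := ⟨n + i.1, by have := i.isLt; omega⟩

/-- `vol = e₁ ∧ ⋯ ∧ e_{2n}`. -/
def vol (n : ℕ) : EA n := (List.ofFn fun i : Fin (2 * n) => e n i).prod

/-- `v₁ = e₁ ∧ ⋯ ∧ e_n`. -/
def v₁ (n : ℕ) : EA n := (List.ofFn fun i : Fin n => e n (lo n i)).prod

/-- `v₂ = e_{n+1} ∧ ⋯ ∧ e_{2n}`. -/
def v₂ (n : ℕ) : EA n := (List.ofFn fun i : Fin n => e n (hi n i)).prod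

/-- `τ(N) = ∑_{i=1}^n e₁ ∧ ⋯ ∧ e_{i-1} ∧ (∑_{j=1}^n N_{ji} e_{n+j}) ∧ e_{i+1} ∧ ⋯ ∧ e_n`. -/
def tau (n : ℕ) (N : Matrix (Fin n) (Fin n) ℝ) : EA n :=
  ∑ i : Fin n,
    (List.ofFn fun k : Fin n =>
      if k = i then ExteriorAlgebra.ι ℝ (∑ j : Fin n, N j i • stdv n (hi n j))
      else e n (lo n k)).prod

/-- `Λ_M = (e₁ + ∑_j M_{j1} e_{n+j}) ∧ ⋯ ∧ (e_n + ∑_j M_{jn} e_{n+j})`,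
the Plücker vector of the graph Lagrangian `U_M·Span(e₁,…,e_n)`. -/
def LambdaW (n : ℕ) (M : Matrix (Fin n) (Fin n) ℝ) : EA n :=
  (List.ofFn fun i : Fin n =>
    ExteriorAlgebra.ι ℝ (stdv n (lo n i) + ∑ j : Fin n, M j i • stdv n (hi n j))).prod

end ExteriorSetup

noncomputable section AuxProof

open Matrix

variable {n : ℕ}

/-- The "coefficient of the volume form" functional. -/
def Fdet (n : ℕ) : EA n →ₗ[ℝ] ℝ :=
  ExteriorAlgebra.liftAlternating
    (Function.update (0 : ∀ i, (Fin (2 * n) → ℝ) [⋀^Fin i]→ₗ[ℝ] ℝ) (2 * n)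
      Matrix.detRowAlternating)

lemma Fdet_prod (r : Fin (2 * n) → Fin (2 * n) → ℝ) :
    Fdet n (List.ofFn fun i => ExteriorAlgebra.ι ℝ (r i)).prod = (Matrix.of r).det := by
  rw [← ExteriorAlgebra.ιMulti_apply, Fdet, ExteriorAlgebra.liftAlternating_apply_ιMulti,
    Function.update_self]
  rfl

/-- Interleave two families of `n` vectors into one family of `2n` vectors. -/
def glue (n : ℕ) (a b : Fin n → Fin (2 * n) → ℝ) : Fin (2 * n) → Fin (2 * n) → ℝ :=
  fun i => if h : (i : ℕ) < n then a ⟨i, h⟩ else b ⟨(i : ℕ) - n, by have := i.isLt; omega⟩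

lemma glue_lo (a b : Fin n → Fin (2 * n) → ℝ) (i : Fin n) :
    glue n a b (lo n i) = a i := by
  simp [glue, lo]

lemma glue_hi (a b : Fin n → Fin (2 * n) → ℝ) (i : Fin n) :
    glue n a b (hi n i) = b i := by
  have h : ¬ ((hi n i : ℕ) < n) := by simp [hi]
  rw [glue, dif_neg h]
  congr 1
  ext
  simp [hi]

lemma ofFn_split {α : Type*} (g : Fin (2 * n) → α) :
    List.ofFn g =
      (List.ofFn fun i : Fin n => g (lo n i)) ++ (List.ofFn fun i : Fin n => g (hi n i)) := by
  have hlo : ∀ i : Fin n,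
      Fin.cast (two_mul n).symm (Fin.castAdd n i) = lo n i := by
    intro i; ext; simp [lo]
  have hhi : ∀ i : Fin n,
      Fin.cast (two_mul n).symm (Fin.natAdd n i) = hi n i := by
    intro i; ext; simp [hi]; omega
  rw [List.ofFn_congr (two_mul n) g, List.ofFn_add]
  simp only [hlo, hhi]
  rfl

lemma prod_glue (a b : Fin n → Fin (2 * n) → ℝ) :
    ((List.ofFn fun i : Fin n => ExteriorAlgebra.ι ℝ (a i)).prod *
      (List.ofFn fun i : Fin n => ExteriorAlgebra.ι ℝ (b i)).prod : EA n) =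
    (List.ofFn fun i : Fin (2 * n) => ExteriorAlgebra.ι ℝ (glue n a b i)).prod := by
  rw [ofFn_split (fun i : Fin (2 * n) => ExteriorAlgebra.ι ℝ (glue n a b i)),
    List.prod_append]
  simp only [glue_lo, glue_hi]

def sumEquiv (n : ℕ) : Fin n ⊕ Fin n ≃ Fin (2 * n) :=
  finSumFinEquiv.trans (finCongr (two_mul n).symm)

lemma sumEquiv_inl (i : Fin n) : sumEquiv n (Sum.inl i) = lo n i := by
  ext; simp [sumEquiv, lo]

lemma sumEquiv_inr (i : Fin n) : sumEquiv n (Sum.inr i) = hi n i := by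
  ext
  simp only [sumEquiv, Equiv.trans_apply, finSumFinEquiv_apply_right, finCongr_apply,
    Fin.coe_cast, Fin.coe_natAdd, hi]

lemma det_glue (a b : Fin n → Fin (2 * n) → ℝ) :
    (Matrix.of (glue n a b)).det =
      (Matrix.fromBlocks
        (Matrix.of fun i j => a i (lo n j)) (Matrix.of fun i j => a i (hi n j))
        (Matrix.of fun i j => b i (lo n j)) (Matrix.of fun i j => b i (hi n j))).det := by
  rw [← Matrix.det_submatrix_equiv_self (sumEquiv n) (Matrix.of (glue n a b))]
  congr 1
  ext i j
  cases i <;> cases j <;>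
    simp [Matrix.submatrix_apply, sumEquiv_inl, sumEquiv_inr, glue_lo, glue_hi]

lemma stdv_lo_lo (i j : Fin n) : stdv n (lo n i) (lo n j) = if j = i then 1 else 0 := by
  simp only [stdv, Pi.single_apply]
  by_cases h : j = i
  · simp [h]
  · rw [if_neg, if_neg h]
    intro hc
    exact h (Fin.ext (by simpa [lo, Fin.ext_iff] using hc))

lemma stdv_lo_hi (i j : Fin n) : stdv n (lo n i) (hi n j) = 0 := by
  simp only [stdv, Pi.single_apply]
  rw [if_neg]
  intro hc
  have := congrArg Fin.val hc
  simp only [lo, hi] at this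
  omega

lemma stdv_hi_lo (i j : Fin n) : stdv n (hi n i) (lo n j) = 0 := by
  simp only [stdv, Pi.single_apply]
  rw [if_neg]
  intro hc
  have := congrArg Fin.val hc
  simp only [lo, hi] at this
  omega

lemma stdv_hi_hi (i j : Fin n) : stdv n (hi n i) (hi n j) = if j = i then 1 else 0 := by
  simp only [stdv, Pi.single_apply]
  by_cases h : j = i
  · simp [h]
  · rw [if_neg, if_neg h]
    intro hc
    have := congrArg Fin.val hc
    simp only [hi] at this
    exact h (Fin.ext (by omega))

/-- The rows of `v₁`. -/
def avec (n : ℕ) : Fin n → Fin (2 * n) → ℝ := fun i => stdv n (lo n i)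

/-- The rows of `v₂`. -/
def bvec (n : ℕ) : Fin n → Fin (2 * n) → ℝ := fun i => stdv n (hi n i)

/-- The rows of `Λ_M`. -/
def lvec (n : ℕ) (M : Matrix (Fin n) (Fin n) ℝ) : Fin n → Fin (2 * n) → ℝ :=
  fun i => stdv n (lo n i) + ∑ j : Fin n, M j i • stdv n (hi n j)

/-- The rows of the `i`-th term of `τ(N)`. -/
def tvec (n : ℕ) (N : Matrix (Fin n) (Fin n) ℝ) (i : Fin n) : Fin n → Fin (2 * n) → ℝ :=
  fun k => if k = i then (∑ j : Fin n, N j i • stdv n (hi n j)) else stdv n (lo n k)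

lemma v₁_eq : v₁ n = (List.ofFn fun i : Fin n => ExteriorAlgebra.ι ℝ (avec n i)).prod := rfl

lemma v₂_eq : v₂ n = (List.ofFn fun i : Fin n => ExteriorAlgebra.ι ℝ (bvec n i)).prod := rfl

lemma LambdaW_eq (M : Matrix (Fin n) (Fin n) ℝ) :
    LambdaW n M = (List.ofFn fun i : Fin n => ExteriorAlgebra.ι ℝ (lvec n M i)).prod := rfl

lemma tau_eq (N : Matrix (Fin n) (Fin n) ℝ) :
    tau n N = ∑ i : Fin n,
      (List.ofFn fun k : Fin n => ExteriorAlgebra.ι ℝ (tvec n N i k)).prod := by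
  unfold tau tvec e
  refine Finset.sum_congr rfl fun i _ => ?_
  congr 1
  refine congrArg _ (funext fun k => ?_)
  split <;> rfl

lemma det_one_updateRow (i : Fin n) (w : Fin n → ℝ) :
    ((1 : Matrix (Fin n) (Fin n) ℝ).updateRow i w).det = w i := by
  have h : (1 : Matrix (Fin n) (Fin n) ℝ).updateRow i w =
      ((1 : Matrix (Fin n) (Fin n) ℝ).updateCol i w)ᵀ := by
    rw [← Matrix.updateRow_transpose, Matrix.transpose_one]
  rw [h, Matrix.det_transpose, ← Matrix.cramer_apply, Matrix.cramer_one]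
  rfl

lemma Fdet_v₁_v₂ : Fdet n (v₁ n * v₂ n) = 1 := by
  rw [v₁_eq, v₂_eq, prod_glue, Fdet_prod, det_glue]
  have hA : (Matrix.of fun i j => avec n i (lo n j)) = (1 : Matrix (Fin n) (Fin n) ℝ) := by
    ext i j; simp [avec, stdv_lo_lo, Matrix.one_apply, eq_comm]
  have hB : (Matrix.of fun i j => avec n i (hi n j)) = (0 : Matrix (Fin n) (Fin n) ℝ) := by
    ext i j; simp [avec, stdv_lo_hi]
  have hC : (Matrix.of fun i j => bvec n i (lo n j)) = (0 : Matrix (Fin n) (Fin n) ℝ) := by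
    ext i j; simp [bvec, stdv_hi_lo]
  have hD : (Matrix.of fun i j => bvec n i (hi n j)) = (1 : Matrix (Fin n) (Fin n) ℝ) := by
    ext i j; simp [bvec, stdv_hi_hi, Matrix.one_apply, eq_comm]
  rw [hA, hB, hC, hD, Matrix.fromBlocks_one, Matrix.det_one]

lemma lvec_lo (M : Matrix (Fin n) (Fin n) ℝ) (i k : Fin n) :
    lvec n M i (lo n k) = (1 : Matrix (Fin n) (Fin n) ℝ) i k := by
  simp [lvec, stdv_lo_lo, stdv_hi_lo, Matrix.one_apply, eq_comm]

lemma lvec_hi (M : Matrix (Fin n) (Fin n) ℝ) (i k : Fin n) :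
    lvec n M i (hi n k) = M k i := by
  simp [lvec, stdv_lo_hi, stdv_hi_hi, mul_ite, mul_one, mul_zero, Finset.sum_ite_eq]

lemma Fdet_v₁_L (M : Matrix (Fin n) (Fin n) ℝ) : Fdet n (v₁ n * LambdaW n M) = M.det := by
  rw [v₁_eq, LambdaW_eq, prod_glue, Fdet_prod, det_glue]
  have hA : (Matrix.of fun i j => avec n i (lo n j)) = (1 : Matrix (Fin n) (Fin n) ℝ) := by
    ext i j; simp [avec, stdv_lo_lo, Matrix.one_apply, eq_comm]
  have hB : (Matrix.of fun i j => avec n i (hi n j)) = (0 : Matrix (Fin n) (Fin n) ℝ) := by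
    ext i j; simp [avec, stdv_lo_hi]
  have hD : (Matrix.of fun i j => lvec n M i (hi n j)) = Mᵀ := by
    ext i j; simp [lvec_hi]
  rw [hA, hB, hD, Matrix.det_fromBlocks_zero₁₂, Matrix.det_one, one_mul, Matrix.det_transpose]

lemma tvec_lo (N : Matrix (Fin n) (Fin n) ℝ) (i k l : Fin n) :
    tvec n N i k (lo n l) = if k = i then 0 else (1 : Matrix (Fin n) (Fin n) ℝ) k l := by
  by_cases h : k = i <;>
    simp [tvec, h, stdv_lo_lo, stdv_hi_lo, Matrix.one_apply, eq_comm]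

lemma tvec_hi (N : Matrix (Fin n) (Fin n) ℝ) (i k l : Fin n) :
    tvec n N i k (hi n l) = if k = i then N l i else 0 := by
  by_cases h : k = i <;>
    simp [tvec, h, stdv_lo_hi, stdv_hi_hi, mul_ite, mul_one, mul_zero, Finset.sum_ite_eq]

lemma Fdet_tau_v₂ (N : Matrix (Fin n) (Fin n) ℝ) : Fdet n (tau n N * v₂ n) = 0 := by
  rw [tau_eq, Finset.sum_mul, map_sum]
  refine Finset.sum_eq_zero fun i _ => ?_
  rw [v₂_eq, prod_glue, Fdet_prod, det_glue]
  have hC : (Matrix.of fun i j => bvec n i (lo n j)) = (0 : Matrix (Fin n) (Fin n) ℝ) := by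
    ext i j; simp [bvec, stdv_hi_lo]
  have hD : (Matrix.of fun i j => bvec n i (hi n j)) = (1 : Matrix (Fin n) (Fin n) ℝ) := by
    ext i j; simp [bvec, stdv_hi_hi, Matrix.one_apply, eq_comm]
  rw [hC, hD, Matrix.det_fromBlocks_zero₂₁]
  have : (Matrix.of fun k l => tvec n N i k (lo n l)).det = 0 := by
    refine Matrix.det_eq_zero_of_row_eq_zero i fun j => ?_
    simp [tvec_lo]
  rw [this, zero_mul]

lemma Fdet_tau_L (M N : Matrix (Fin n) (Fin n) ℝ) (hMdet : IsUnit Mᵀ.det) :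
    Fdet n (tau n N * LambdaW n M) =
      -(Mᵀ.det * ∑ i : Fin n, ∑ j : Fin n, N j i * (Mᵀ)⁻¹ j i) := by
  haveI : Invertible Mᵀ := Mᵀ.invertibleOfIsUnitDet hMdet
  have hterm : ∀ i : Fin n,
      Fdet n ((List.ofFn fun k : Fin n => ExteriorAlgebra.ι ℝ (tvec n N i k)).prod *
        LambdaW n M) = Mᵀ.det * (-(∑ j : Fin n, N j i * (Mᵀ)⁻¹ j i)) := by
    intro i
    rw [LambdaW_eq, prod_glue, Fdet_prod, det_glue]
    have hC : (Matrix.of fun i j => lvec n M i (lo n j)) = (1 : Matrix (Fin n) (Fin n) ℝ) := by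
      ext i j; simp [lvec_lo]
    have hD : (Matrix.of fun i j => lvec n M i (hi n j)) = Mᵀ := by
      ext i j; simp [lvec_hi]
    rw [hC, hD, Matrix.det_fromBlocks₂₂, Matrix.mul_one, Matrix.invOf_eq_nonsing_inv]
    congr 1
    have hE : (Matrix.of fun k l => tvec n N i k (lo n l)) -
        (Matrix.of fun k l => tvec n N i k (hi n l)) * (Mᵀ)⁻¹ =
        (1 : Matrix (Fin n) (Fin n) ℝ).updateRow i
          (fun l => -(∑ j : Fin n, N j i * (Mᵀ)⁻¹ j l)) := by
      ext k l
      rw [Matrix.sub_apply, Matrix.updateRow_apply, Matrix.mul_apply]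
      by_cases h : k = i
      · subst h
        simp [tvec_lo, tvec_hi]
      · simp [h, tvec_lo, tvec_hi]
    rw [hE, det_one_updateRow]
  rw [tau_eq, Finset.sum_mul, map_sum, Finset.sum_congr rfl fun i _ => hterm i]
  rw [Finset.mul_sum, ← Finset.sum_neg_distrib]
  exact Finset.sum_congr rfl fun i _ => by ring

/-- Positivity of `∑ᵢⱼ Nⱼᵢ Pⱼᵢ` for `P` pos. def. and `N` pos. semidef. nonzero. -/
lemma trace_pos (P N : Matrix (Fin n) (Fin n) ℝ) (hP : P.PosDef) (hN : N.PosSemidef)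
    (hN0 : N ≠ 0) : 0 < ∑ i : Fin n, ∑ j : Fin n, N j i * P j i := by
  obtain ⟨B, hB⟩ : ∃ B : Matrix (Fin n) (Fin n) ℝ, N = Bᴴ * B := by
    open scoped MatrixOrder in exact CStarAlgebra.nonneg_iff_eq_star_mul_self.mp hN.nonneg
  have key : (∑ i : Fin n, ∑ j : Fin n, N j i * P j i)
      = ∑ k : Fin n, (B k) ⬝ᵥ (P *ᵥ (B k)) := by
    have e1 : ∀ (f : Fin n → Fin n → Fin n → ℝ),
        (∑ i : Fin n, ∑ j : Fin n, ∑ k : Fin n, f i j k) =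
          ∑ k : Fin n, ∑ j : Fin n, ∑ i : Fin n, f i j k := by
      intro f
      have h1 : ∀ i : Fin n, (∑ j : Fin n, ∑ k : Fin n, f i j k) =
          ∑ k : Fin n, ∑ j : Fin n, f i j k := fun i => Finset.sum_comm
      simp_rw [h1]
      rw [Finset.sum_comm]
      exact Finset.sum_congr rfl fun k _ => Finset.sum_comm
    subst hB
    simp only [Matrix.mul_apply, Matrix.conjTranspose_apply, star_trivial,
      dotProduct, Matrix.mulVec, Finset.sum_mul, Finset.mul_sum]
    rw [e1]
    exact Finset.sum_congr rfl fun k _ => Finset.sum_congr rfl fun j _ =>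
      Finset.sum_congr rfl fun i _ => by ring
  rw [key]
  have hB0 : ∃ k, B k ≠ 0 := by
    by_contra hall
    push_neg at hall
    apply hN0
    rw [hB]
    ext i j
    simp [Matrix.mul_apply, fun k => congrFun (hall k) j, Matrix.conjTranspose_apply]
  obtain ⟨k₀, hk₀⟩ := hB0
  refine Finset.sum_pos' (fun k _ => ?_) ⟨k₀, Finset.mem_univ _, ?_⟩
  · have := hP.posSemidef.dotProduct_mulVec_nonneg (B k)
    simpa using this
  · have := hP.dotProduct_mulVec_pos hk₀
    simpa using this

end AuxProof

section Main

open Matrix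

/-- Proposition 3.2 (measurable (1,1,2)-hypertransversality), linear-algebraic content:
if `M` is symmetric positive definite, `N` is nonzero symmetric positive semidefinite,
and `c₁·v₂ + c₂·Λ_M` is annihilated under the wedge pairing by both `v₁` and `τ(N)`,
then `c₁ = c₂ = 0`; i.e. `Span(v₂) ⊕ Span(Λ_M) ⊕ Ann(Span(v₁, τ(N)))` is direct. -/
theorem hypertransversality (n : ℕ) (hn : 1 ≤ n) (M N : Matrix (Fin n) (Fin n) ℝ)
    (hM : M.PosDef) (hN : N.PosSemidef) (hN0 : N ≠ 0) (c₁ c₂ : ℝ)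
    (h1 : v₁ n * (c₁ • v₂ n + c₂ • LambdaW n M) = 0)
    (h2 : tau n N * (c₁ • v₂ n + c₂ • LambdaW n M) = 0) :
    c₁ = 0 ∧ c₂ = 0 := by
  have hMdet : (0 : ℝ) < M.det := hM.det_pos
  have hMTdet : IsUnit Mᵀ.det := by
    rw [Matrix.det_transpose]
    exact isUnit_iff_ne_zero.mpr hMdet.ne'
  have hPT : ((Mᵀ)⁻¹).PosDef := hM.transpose.inv
  have hs : 0 < ∑ i : Fin n, ∑ j : Fin n, N j i * (Mᵀ)⁻¹ j i :=
    trace_pos _ _ hPT hN hN0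
  have e1 : c₁ + c₂ * M.det = 0 := by
    have h := congrArg (Fdet n) h1
    rw [map_zero, mul_add, mul_smul_comm, mul_smul_comm, map_add, LinearMap.map_smul, LinearMap.map_smul,
      Fdet_v₁_v₂, Fdet_v₁_L] at h
    simp only [smul_eq_mul, mul_one] at h
    linarith
  have e2 : c₂ * (Mᵀ.det * ∑ i : Fin n, ∑ j : Fin n, N j i * (Mᵀ)⁻¹ j i) = 0 := by
    have h := congrArg (Fdet n) h2
    rw [map_zero, mul_add, mul_smul_comm, mul_smul_comm, map_add, LinearMap.map_smul, LinearMap.map_smul,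
      Fdet_tau_v₂, Fdet_tau_L M N hMTdet] at h
    simp only [smul_eq_mul, mul_zero, zero_add, mul_neg] at h
    linarith
  have hpos : 0 < Mᵀ.det * ∑ i : Fin n, ∑ j : Fin n, N j i * (Mᵀ)⁻¹ j i := by
    apply mul_pos _ hs
    rw [Matrix.det_transpose]; exact hMdet
  have hc₂ : c₂ = 0 := by
    rcases mul_eq_zero.mp e2 with h | h
    · exact h
    · exact absurd h hpos.ne'
  refine ⟨?_, hc₂⟩
  rw [hc₂, zero_mul, add_zero] at e1
  exact e1

end Main
end

section
/- Fix n ≥ 1. For every finite family A₁, …, A_k of symmetric positive semidefinite real n×n matrices, ∑_{i=1}^k ‖A_i‖_F ≤ √n · ‖∑_{i=1}^k A_i‖_F, where ‖X‖_F := √(trace(Xᵀ·X)) is the Frobenius norm. -/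
open Matrix

lemma aux_traces (n : ℕ) (A : Matrix (Fin n) (Fin n) ℝ) (hA : A.PosSemidef) :
    A.trace = ∑ i, hA.1.eigenvalues i ∧
    (Aᵀ * A).trace = ∑ i, (hA.1.eigenvalues i) ^ 2 := by
  have hH := hA.1
  set U : Matrix (Fin n) (Fin n) ℝ := (hH.eigenvectorUnitary : Matrix (Fin n) (Fin n) ℝ)
  set D : Matrix (Fin n) (Fin n) ℝ := diagonal (RCLike.ofReal ∘ hH.eigenvalues)
  have hUU : star U * U = 1 := (Matrix.mem_unitaryGroup_iff').mp hH.eigenvectorUnitary.2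
  have hspec : A = U * D * star U := hH.spectral_theorem
  have hAt : Aᵀ = A := by
    rw [← conjTranspose_eq_transpose_of_trivial]; exact hH
  constructor
  · have e1 : A.trace = (U * D * star U).trace := by rw [← hspec]
    rw [e1, trace_mul_comm, ← mul_assoc, hUU, one_mul]
    simp [D, trace_diagonal]
  · have : Aᵀ * A = U * (D * D) * star U := by
      rw [hAt]; conv_lhs => rw [hspec]
      rw [show U * D * star U * (U * D * star U) = U * D * (star U * U) * D * star U by
        noncomm_ring]
      rw [hUU]; noncomm_ring
    rw [this, trace_mul_comm, ← mul_assoc, hUU, one_mul]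
    simp [D, diagonal_mul_diagonal, trace_diagonal, pow_two]

/-- Acuteness of the positive semidefinite cone, underlying Lemma 5.3: for any
finite family `A₁, …, A_k` of symmetric positive semidefinite real `n × n`
matrices, `∑ ‖A_i‖_F ≤ √n · ‖∑ A_i‖_F`, where `‖X‖_F = √(trace(Xᵀ·X))` is the
Frobenius norm. -/
theorem sum_frobenius_le_sqrt_n_mul_frobenius_sum (n : ℕ) (hn : 1 ≤ n)
    (k : ℕ) (A : Fin k → Matrix (Fin n) (Fin n) ℝ)
    (hA : ∀ i, (A i).PosSemidef) :
    ∑ i, Real.sqrt (((A i)ᵀ * A i).trace) ≤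
      Real.sqrt n * Real.sqrt (((∑ i, A i)ᵀ * ∑ i, A i).trace) := by
  have hS : (∑ i, A i).PosSemidef := by
    induction k with
    | zero => simpa using Matrix.PosSemidef.zero
    | succ m ih =>
      rw [Fin.sum_univ_succ]
      exact (hA 0).add (ih (fun i => A i.succ) (fun i => hA i.succ))
  -- Step 1: ‖A_i‖_F ≤ trace (A_i)
  have step1 : ∀ i, Real.sqrt (((A i)ᵀ * A i).trace) ≤ (A i).trace := by
    intro i
    obtain ⟨h1, h2⟩ := aux_traces n (A i) (hA i)
    have hnn : ∀ j, 0 ≤ (hA i).1.eigenvalues j := (hA i).eigenvalues_nonneg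
    rw [h1, h2]
    have : ∑ j, ((hA i).1.eigenvalues j) ^ 2 ≤ (∑ j, (hA i).1.eigenvalues j) ^ 2 :=
      Finset.sum_sq_le_sq_sum_of_nonneg (fun j _ => hnn j)
    calc Real.sqrt (∑ j, ((hA i).1.eigenvalues j) ^ 2)
        ≤ Real.sqrt ((∑ j, (hA i).1.eigenvalues j) ^ 2) := Real.sqrt_le_sqrt this
      _ = ∑ j, (hA i).1.eigenvalues j := by
          rw [Real.sqrt_sq (Finset.sum_nonneg fun j _ => hnn j)]
  -- Step 2: trace (∑ A_i) ≤ √n ‖∑ A_i‖_F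
  obtain ⟨h1, h2⟩ := aux_traces n (∑ i, A i) hS
  have hnn : ∀ j, 0 ≤ hS.1.eigenvalues j := hS.eigenvalues_nonneg
  have step2 : (∑ i, A i).trace ≤
      Real.sqrt n * Real.sqrt (((∑ i, A i)ᵀ * ∑ i, A i).trace) := by
    rw [h1, h2]
    have hcs : (∑ j, hS.1.eigenvalues j) ^ 2 ≤
        (Finset.univ : Finset (Fin n)).card * ∑ j, (hS.1.eigenvalues j) ^ 2 :=
      sq_sum_le_card_mul_sum_sq
    have hle : (∑ j, hS.1.eigenvalues j) ^ 2 ≤ n * ∑ j, (hS.1.eigenvalues j) ^ 2 := by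
      simpa using hcs
    have := Real.sqrt_le_sqrt hle
    rw [Real.sqrt_sq (Finset.sum_nonneg fun j _ => hnn j),
      Real.sqrt_mul (by positivity)] at this
    exact this
  calc ∑ i, Real.sqrt (((A i)ᵀ * A i).trace)
      ≤ ∑ i, (A i).trace := Finset.sum_le_sum fun i _ => step1 i
    _ = (∑ i, A i).trace := by rw [trace_sum]
    _ ≤ _ := step2
end
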